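/- The reduction relation of the record calculus Λ_R satisfies the Church–Rosser property: for every term M, if M ⟶* M₁ and M ⟶* M₂, then there exists a term M₃ such that M₁ ⟶* M₃ and M₂ ⟶* M₃. -/

import Mathlib

/-- Terms of the record calculus `Λ_R`, with de Bruijn indices for bound variables
(so that terms are identified up to α-conversion) and labels drawn from `ℕ`.
Records are finite lists of label/term pairs; in `merge M fs` the right operand
is syntactically a record. -/
inductive Tm where
  | var : Nat → Tm
  | lam : Tm → Tm
  | app : Tm → Tm → Tm
  | sel : Tm → Nat → Tm
  | rcd : List (Nat × Tm) → Tm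
  | merge : Tm → List (Nat × Tm) → Tm

namespace Tm

/-- The list of field labels of a record. -/
def keys (fs : List (Nat × Tm)) : List Nat := fs.map Prod.fst

/-- The set of field labels `lbl(R)` of a record. -/
def lblR (fs : List (Nat × Tm)) : Finset Nat := (keys fs).toFinset

/-- Record merge on field lists: fields of the first record whose label does not
occur in the second record, followed by all fields of the second record. -/
def mergeFields (fs gs : List (Nat × Tm)) : List (Nat × Tm) :=
  fs.filter (fun p => decide (p.1 ∉ keys gs)) ++ gs

end Tm
namespace Tm

def liftF (f : Nat → Nat) : Nat → Nat
  | 0 => 0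
  | n + 1 => f n + 1

mutual
/-- Renaming of (de Bruijn) variables. -/
def rename (f : Nat → Nat) : Tm → Tm
  | var x => var (f x)
  | lam M => lam (rename (liftF f) M)
  | app M N => app (rename f M) (rename f N)
  | sel M l => sel (rename f M) l
  | rcd fs => rcd (renameFields f fs)
  | merge M fs => merge (rename f M) (renameFields f fs)
def renameFields (f : Nat → Nat) : List (Nat × Tm) → List (Nat × Tm)
  | [] => []
  | (l, M) :: fs => (l, rename f M) :: renameFields f fs
end

def upS (s : Nat → Tm) : Nat → Tm
  | 0 => var 0
  | n + 1 => rename Nat.succ (s n)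

mutual
/-- Capture-avoiding (parallel) substitution. -/
def subst (s : Nat → Tm) : Tm → Tm
  | var x => s x
  | lam M => lam (subst (upS s) M)
  | app M N => app (subst s M) (subst s N)
  | sel M l => sel (subst s M) l
  | rcd fs => rcd (substFields s fs)
  | merge M fs => merge (subst s M) (substFields s fs)
def substFields (s : Nat → Tm) : List (Nat × Tm) → List (Nat × Tm)
  | [] => []
  | (l, M) :: fs => (l, subst s M) :: substFields s fs
end

/-- `M[N/x]` for the outermost bound variable: capture-avoiding substitution of `N`
for the de Bruijn index `0` in `M`. -/
def subst0 (N M : Tm) : Tm :=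
  subst (fun n => match n with | 0 => N | n + 1 => var n) M

end Tm
/-- The reduction relation of `Λ_R`: the least compatible relation containing
(β), (sel) and (⊕). -/
inductive Red : Tm → Tm → Prop where
  | beta (M N : Tm) : Red (.app (.lam M) N) (Tm.subst0 N M)
  | sel {fs : List (Nat × Tm)} {l : Nat} {M : Tm} :
      List.lookup l fs = some M → Red (.sel (.rcd fs) l) M
  | mergeRcd (fs gs : List (Nat × Tm)) :
      Red (.merge (.rcd fs) gs) (.rcd (Tm.mergeFields fs gs))
  | appL {M M' : Tm} (N : Tm) : Red M M' → Red (.app M N) (.app M' N)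
  | appR (M : Tm) {N N' : Tm} : Red N N' → Red (.app M N) (.app M N')
  | lam {M M' : Tm} : Red M M' → Red (.lam M) (.lam M')
  | selC {M M' : Tm} (l : Nat) : Red M M' → Red (.sel M l) (.sel M' l)
  | mergeL {M M' : Tm} (fs : List (Nat × Tm)) : Red M M' → Red (.merge M fs) (.merge M' fs)
  | rcdField {M M' : Tm} (fs gs : List (Nat × Tm)) (l : Nat) : Red M M' →
      Red (.rcd (fs ++ (l, M) :: gs)) (.rcd (fs ++ (l, M') :: gs))
  | mergeField (N : Tm) {M M' : Tm} (fs gs : List (Nat × Tm)) (l : Nat) : Red M M' →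
      Red (.merge N (fs ++ (l, M) :: gs)) (.merge N (fs ++ (l, M') :: gs))

/-- Reflexive–transitive closure `⟶*` of reduction. -/
def RedStar : Tm → Tm → Prop := Relation.ReflTransGen Red

namespace Tm

theorem liftF_comp (f g : Nat → Nat) : liftF (fun n => f (g n)) = fun n => liftF f (liftF g n) := by
  funext n; cases n <;> rfl

mutual
theorem rename_rename (f g : Nat → Nat) :
    ∀ M, rename f (rename g M) = rename (fun n => f (g n)) M
  | .var x => by simp [rename]
  | .lam M => by simp [rename, rename_rename (liftF f) (liftF g) M, liftF_comp]
  | .app M N => by simp [rename, rename_rename f g M, rename_rename f g N]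
  | .sel M l => by simp [rename, rename_rename f g M]
  | .rcd fs => by simp [rename, renameFields_renameFields f g fs]
  | .merge M fs => by simp [rename, rename_rename f g M, renameFields_renameFields f g fs]
theorem renameFields_renameFields (f g : Nat → Nat) :
    ∀ fs, renameFields f (renameFields g fs) = renameFields (fun n => f (g n)) fs
  | [] => rfl
  | (l, M) :: fs => by
      simp [renameFields, rename_rename f g M, renameFields_renameFields f g fs]
end

theorem upS_comp_rename (s : Nat → Tm) (f : Nat → Nat) :
    upS (fun n => s (f n)) = fun n => upS s (liftF f n) := by
  funext n; cases n <;> rfl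

mutual
theorem subst_rename (s : Nat → Tm) (f : Nat → Nat) :
    ∀ M, subst s (rename f M) = subst (fun n => s (f n)) M
  | .var x => by simp [rename, subst]
  | .lam M => by
      simp [rename, subst, subst_rename (upS s) (liftF f) M, upS_comp_rename]
  | .app M N => by simp [rename, subst, subst_rename s f M, subst_rename s f N]
  | .sel M l => by simp [rename, subst, subst_rename s f M]
  | .rcd fs => by simp [rename, subst, substFields_renameFields s f fs]
  | .merge M fs => by
      simp [rename, subst, subst_rename s f M, substFields_renameFields s f fs]
theorem substFields_renameFields (s : Nat → Tm) (f : Nat → Nat) :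
    ∀ fs, substFields s (renameFields f fs) = substFields (fun n => s (f n)) fs
  | [] => rfl
  | (l, M) :: fs => by
      simp [renameFields, substFields, subst_rename s f M, substFields_renameFields s f fs]
end

theorem upS_rename (s : Nat → Tm) (f : Nat → Nat) :
    upS (fun n => rename f (s n)) = fun n => rename (liftF f) (upS s n) := by
  funext n; cases n with
  | zero => rfl
  | succ n =>
      simp only [upS, rename_rename]
      congr 1

mutual
theorem rename_subst (f : Nat → Nat) (s : Nat → Tm) :
    ∀ M, rename f (subst s M) = subst (fun n => rename f (s n)) M
  | .var x => by simp [rename, subst]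
  | .lam M => by
      simp [rename, subst, rename_subst (liftF f) (upS s) M, upS_rename]
  | .app M N => by simp [rename, subst, rename_subst f s M, rename_subst f s N]
  | .sel M l => by simp [rename, subst, rename_subst f s M]
  | .rcd fs => by simp [rename, subst, renameFields_substFields f s fs]
  | .merge M fs => by
      simp [rename, subst, rename_subst f s M, renameFields_substFields f s fs]
theorem renameFields_substFields (f : Nat → Nat) (s : Nat → Tm) :
    ∀ fs, renameFields f (substFields s fs) = substFields (fun n => rename f (s n)) fs
  | [] => rfl
  | (l, M) :: fs => by
      simp [renameFields, substFields, rename_subst f s M, renameFields_substFields f s fs]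
end

theorem upS_subst (s t : Nat → Tm) :
    upS (fun n => subst s (t n)) = fun n => subst (upS s) (upS t n) := by
  funext n; cases n with
  | zero => rfl
  | succ n =>
      simp only [upS, rename_subst, subst_rename]

mutual
theorem subst_subst (s t : Nat → Tm) :
    ∀ M, subst s (subst t M) = subst (fun n => subst s (t n)) M
  | .var x => by simp [subst]
  | .lam M => by
      simp [subst, subst_subst (upS s) (upS t) M, upS_subst]
  | .app M N => by simp [subst, subst_subst s t M, subst_subst s t N]
  | .sel M l => by simp [subst, subst_subst s t M]
  | .rcd fs => by simp [subst, substFields_substFields s t fs]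
  | .merge M fs => by
      simp [subst, subst_subst s t M, substFields_substFields s t fs]
theorem substFields_substFields (s t : Nat → Tm) :
    ∀ fs, substFields s (substFields t fs) = substFields (fun n => subst s (t n)) fs
  | [] => rfl
  | (l, M) :: fs => by
      simp [substFields, subst_subst s t M, substFields_substFields s t fs]
end

theorem upS_var : upS var = var := by
  funext n; cases n <;> rfl

mutual
theorem subst_var : ∀ M, subst var M = M
  | .var x => by simp [subst]
  | .lam M => by simp [subst, upS_var, subst_var M]
  | .app M N => by simp [subst, subst_var M, subst_var N]
  | .sel M l => by simp [subst, subst_var M]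
  | .rcd fs => by simp [subst, substFields_var fs]
  | .merge M fs => by simp [subst, subst_var M, substFields_var fs]
theorem substFields_var : ∀ fs, substFields var fs = fs
  | [] => rfl
  | (l, M) :: fs => by simp [substFields, subst_var M, substFields_var fs]
end

/-- substitution commutes with `subst0`. -/
theorem subst_subst0 (s : Nat → Tm) (N M : Tm) :
    subst s (subst0 N M) = subst0 (subst s N) (subst (upS s) M) := by
  simp only [subst0, subst_subst]
  congr 1
  funext n
  cases n with
  | zero => rfl
  | succ n => simp [subst, upS, subst_rename, subst_var]

/-- renaming commutes with `subst0`. -/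
theorem rename_subst0 (f : Nat → Nat) (N M : Tm) :
    rename f (subst0 N M) = subst0 (rename f N) (rename (liftF f) M) := by
  simp only [subst0, rename_subst, subst_rename]
  congr 1
  funext n
  cases n with
  | zero => rfl
  | succ n => simp [rename, liftF, subst]

end Tm
open Tm in
/-- Parallel reduction (field lists are handled via the `rcd` wrapper). -/
inductive Par : Tm → Tm → Prop where
  | var (x : Nat) : Par (.var x) (.var x)
  | lam {M M'} : Par M M' → Par (.lam M) (.lam M')
  | app {M M' N N'} : Par M M' → Par N N' → Par (.app M N) (.app M' N')
  | beta {M M' N N'} : Par M M' → Par N N' →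
      Par (.app (.lam M) N) (subst0 N' M')
  | selC {M M'} (l : Nat) : Par M M' → Par (.sel M l) (.sel M' l)
  | selR {fs fs' : List (Nat × Tm)} {l : Nat} {M' : Tm} :
      Par (.rcd fs) (.rcd fs') → List.lookup l fs' = some M' →
      Par (.sel (.rcd fs) l) M'
  | rcdNil : Par (.rcd []) (.rcd [])
  | rcdCons {M M'} {fs fs' : List (Nat × Tm)} (l : Nat) :
      Par M M' → Par (.rcd fs) (.rcd fs') →
      Par (.rcd ((l, M) :: fs)) (.rcd ((l, M') :: fs'))
  | mergeC {M M'} {fs fs' : List (Nat × Tm)} :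
      Par M M' → Par (.rcd fs) (.rcd fs') → Par (.merge M fs) (.merge M' fs')
  | mergeR {fs fs' gs gs' : List (Nat × Tm)} :
      Par (.rcd fs) (.rcd fs') → Par (.rcd gs) (.rcd gs') →
      Par (.merge (.rcd fs) gs) (.rcd (mergeFields fs' gs'))

namespace Tm

mutual
theorem par_refl : ∀ M, Par M M
  | .var x => .var x
  | .lam M => .lam (par_refl M)
  | .app M N => .app (par_refl M) (par_refl N)
  | .sel M l => .selC l (par_refl M)
  | .rcd fs => parF_refl fs
  | .merge M fs => .mergeC (par_refl M) (parF_refl fs)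
theorem parF_refl : ∀ fs, Par (.rcd fs) (.rcd fs)
  | [] => .rcdNil
  | (l, M) :: fs => .rcdCons l (par_refl M) (parF_refl fs)
end

theorem rcd_par_inv {fs : List (Nat × Tm)} {X : Tm} (h : Par (.rcd fs) X) :
    ∃ gs, X = .rcd gs := by
  cases h <;> exact ⟨_, rfl⟩

theorem parF_keys : ∀ {fs gs : List (Nat × Tm)},
    Par (.rcd fs) (.rcd gs) → keys fs = keys gs := by
  intro fs
  induction fs with
  | nil => intro gs h; cases h; rfl
  | cons p fs ih =>
      intro gs h
      cases h with
      | rcdCons l hM hfs => simp [keys] at ih ⊢; exact ih hfs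

theorem lookup_parF : ∀ {fs gs : List (Nat × Tm)} {l : Nat} {M : Tm},
    Par (.rcd fs) (.rcd gs) → List.lookup l fs = some M →
    ∃ M', List.lookup l gs = some M' ∧ Par M M' := by
  intro fs
  induction fs with
  | nil => intro gs l M h hl; simp [List.lookup] at hl
  | cons p fs ih =>
      intro gs l M h hl
      cases h with
      | rcdCons l' hM hfs =>
          by_cases hll : l = l'
          · subst hll
            simp [List.lookup] at hl ⊢
            subst hl; exact hM
          · simp [List.lookup, hll, beq_false_of_ne hll] at hl ⊢
            exact ih hfs hl

theorem parF_append : ∀ {as as' bs bs' : List (Nat × Tm)},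
    Par (.rcd as) (.rcd as') → Par (.rcd bs) (.rcd bs') →
    Par (.rcd (as ++ bs)) (.rcd (as' ++ bs')) := by
  intro as
  induction as with
  | nil => intro as' bs bs' h1 h2; cases h1; simpa using h2
  | cons p as ih =>
      intro as' bs bs' h1 h2
      cases h1 with
      | rcdCons l hM has => exact .rcdCons l hM (ih has h2)

theorem mergeFields_cons (l : Nat) (M : Tm) (t gs : List (Nat × Tm)) :
    mergeFields ((l, M) :: t) gs =
      if l ∈ keys gs then mergeFields t gs else (l, M) :: mergeFields t gs := by
  simp [mergeFields, List.filter_cons]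
  by_cases h : l ∈ keys gs <;> simp [h]

theorem mergeFields_par : ∀ {fs fs' gs gs' : List (Nat × Tm)},
    Par (.rcd fs) (.rcd fs') → Par (.rcd gs) (.rcd gs') →
    Par (.rcd (mergeFields fs gs)) (.rcd (mergeFields fs' gs')) := by
  intro fs
  induction fs with
  | nil => intro fs' gs gs' h1 h2; cases h1; simpa [mergeFields] using h2
  | cons p fs ih =>
      intro fs' gs gs' h1 h2
      cases h1 with
      | rcdCons l hM hfs =>
          rw [mergeFields_cons, mergeFields_cons, parF_keys h2]
          by_cases h : l ∈ keys gs'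
          · simp only [h, if_true]; exact ih hfs h2
          · simp only [h, if_false]; exact .rcdCons l hM (ih hfs h2)

end Tm
namespace Tm

theorem keys_renameFields (f : Nat → Nat) : ∀ fs, keys (renameFields f fs) = keys fs
  | [] => rfl
  | (l, M) :: fs => by simp [renameFields, keys, keys_renameFields f fs, keys] at *
                       exact keys_renameFields f fs

theorem keys_substFields (s : Nat → Tm) : ∀ fs, keys (substFields s fs) = keys fs
  | [] => rfl
  | (l, M) :: fs => by simp only [substFields, keys, List.map_cons]
                       exact congrArg _ (keys_substFields s fs)

theorem lookup_renameFields (f : Nat → Nat) {l : Nat} {M : Tm} :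
    ∀ {fs}, List.lookup l fs = some M →
      List.lookup l (renameFields f fs) = some (rename f M) := by
  intro fs
  induction fs with
  | nil => intro h; simp [List.lookup] at h
  | cons p fs ih =>
      obtain ⟨l', N⟩ := p
      intro h
      by_cases hll : l = l'
      · subst hll; simp [List.lookup, renameFields] at h ⊢; subst h; rfl
      · simp [List.lookup, renameFields, beq_false_of_ne hll] at h ⊢
        exact ih h

theorem lookup_substFields (s : Nat → Tm) {l : Nat} {M : Tm} :
    ∀ {fs}, List.lookup l fs = some M →
      List.lookup l (substFields s fs) = some (subst s M) := by
  intro fs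
  induction fs with
  | nil => intro h; simp [List.lookup] at h
  | cons p fs ih =>
      obtain ⟨l', N⟩ := p
      intro h
      by_cases hll : l = l'
      · subst hll; simp [List.lookup, substFields] at h ⊢; subst h; rfl
      · simp [List.lookup, substFields, beq_false_of_ne hll] at h ⊢
        exact ih h

theorem renameFields_append (f : Nat → Nat) : ∀ fs gs,
    renameFields f (fs ++ gs) = renameFields f fs ++ renameFields f gs
  | [], gs => rfl
  | (l, M) :: fs, gs => by simp [renameFields, renameFields_append f fs gs]

theorem substFields_append (s : Nat → Tm) : ∀ fs gs,
    substFields s (fs ++ gs) = substFields s fs ++ substFields s gs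
  | [], gs => rfl
  | (l, M) :: fs, gs => by simp [substFields, substFields_append s fs gs]

theorem renameFields_mergeFields (f : Nat → Nat) : ∀ fs gs,
    renameFields f (mergeFields fs gs) = mergeFields (renameFields f fs) (renameFields f gs)
  | [], gs => by simp [mergeFields, renameFields]
  | (l, M) :: fs, gs => by
      rw [mergeFields_cons,
          show renameFields f ((l, M) :: fs) = (l, rename f M) :: renameFields f fs from rfl,
          mergeFields_cons, keys_renameFields]
      by_cases h : l ∈ keys gs
      · simp only [h, if_true, renameFields]
        exact renameFields_mergeFields f fs gs
      · simp only [h, if_false, renameFields]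
        rw [renameFields_mergeFields f fs gs]

theorem substFields_mergeFields (s : Nat → Tm) : ∀ fs gs,
    substFields s (mergeFields fs gs) = mergeFields (substFields s fs) (substFields s gs)
  | [], gs => by simp [mergeFields, substFields]
  | (l, M) :: fs, gs => by
      rw [mergeFields_cons,
          show substFields s ((l, M) :: fs) = (l, subst s M) :: substFields s fs from rfl,
          mergeFields_cons, keys_substFields]
      by_cases h : l ∈ keys gs
      · simp only [h, if_true, substFields]
        exact substFields_mergeFields s fs gs
      · simp only [h, if_false, substFields]
        rw [substFields_mergeFields s fs gs]

theorem par_rename {M M' : Tm} (h : Par M M') :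
    ∀ f, Par (rename f M) (rename f M') := by
  induction h with
  | var x => intro f; exact .var _
  | lam _ ih => intro f; exact .lam (ih (liftF f))
  | app _ _ ih1 ih2 => intro f; exact .app (ih1 f) (ih2 f)
  | beta _ _ ih1 ih2 =>
      intro f
      rw [show rename f (.app (.lam _) _) = Tm.app (.lam (rename (liftF f) _)) (rename f _) from rfl,
          rename_subst0]
      exact .beta (ih1 (liftF f)) (ih2 f)
  | selC l _ ih => intro f; exact .selC l (ih f)
  | selR _ hl ih =>
      intro f
      exact .selR (ih f) (lookup_renameFields f hl)
  | rcdNil => intro f; exact .rcdNil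
  | rcdCons l _ _ ih1 ih2 =>
      intro f
      exact .rcdCons l (ih1 f) (ih2 f)
  | mergeC _ _ ih1 ih2 => intro f; exact .mergeC (ih1 f) (ih2 f)
  | mergeR _ _ ih1 ih2 =>
      intro f
      rw [show rename f (.rcd (mergeFields _ _)) = Tm.rcd (renameFields f (mergeFields _ _)) from rfl,
          renameFields_mergeFields]
      exact .mergeR (ih1 f) (ih2 f)

theorem par_subst {M M' : Tm} (h : Par M M') :
    ∀ s s', (∀ n, Par (s n) (s' n)) → Par (subst s M) (subst s' M') := by
  induction h with
  | var x => intro s s' hs; exact hs x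
  | lam _ ih =>
      intro s s' hs
      refine .lam (ih _ _ ?_)
      intro n; cases n with
      | zero => exact .var 0
      | succ n => exact par_rename (hs n) Nat.succ
  | app _ _ ih1 ih2 => intro s s' hs; exact .app (ih1 _ _ hs) (ih2 _ _ hs)
  | beta _ _ ih1 ih2 =>
      intro s s' hs
      rw [show subst s (.app (.lam _) _) = Tm.app (.lam (subst (upS s) _)) (subst s _) from rfl,
          subst_subst0]
      refine .beta (ih1 _ _ ?_) (ih2 _ _ hs)
      intro n; cases n with
      | zero => exact .var 0
      | succ n => exact par_rename (hs n) Nat.succ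
  | selC l _ ih => intro s s' hs; exact .selC l (ih _ _ hs)
  | selR _ hl ih =>
      intro s s' hs
      exact .selR (ih _ _ hs) (lookup_substFields s' hl)
  | rcdNil => intro s s' hs; exact .rcdNil
  | rcdCons l _ _ ih1 ih2 => intro s s' hs; exact .rcdCons l (ih1 _ _ hs) (ih2 _ _ hs)
  | mergeC _ _ ih1 ih2 => intro s s' hs; exact .mergeC (ih1 _ _ hs) (ih2 _ _ hs)
  | mergeR _ _ ih1 ih2 =>
      intro s s' hs
      rw [show subst s' (.rcd (mergeFields _ _)) = Tm.rcd (substFields s' (mergeFields _ _)) from rfl,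
          substFields_mergeFields]
      exact .mergeR (ih1 _ _ hs) (ih2 _ _ hs)

theorem par_subst0 {M M' N N' : Tm} (hM : Par M M') (hN : Par N N') :
    Par (subst0 N M) (subst0 N' M') := by
  refine par_subst hM _ _ ?_
  intro n; cases n with
  | zero => exact hN
  | succ n => exact .var n

end Tm
namespace Tm

mutual
/-- Complete development. -/
def cd : Tm → Tm
  | .var x => .var x
  | .lam M => .lam (cd M)
  | .app (.lam P) N => subst0 (cd N) (cd P)
  | .app M N => .app (cd M) (cd N)
  | .sel (.rcd fs) l =>
      match List.lookup l (cdF fs) with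
      | some P => P
      | none => .sel (.rcd (cdF fs)) l
  | .sel M l => .sel (cd M) l
  | .rcd fs => .rcd (cdF fs)
  | .merge (.rcd fs) gs => .rcd (mergeFields (cdF fs) (cdF gs))
  | .merge M gs => .merge (cd M) (cdF gs)
def cdF : List (Nat × Tm) → List (Nat × Tm)
  | [] => []
  | (l, M) :: fs => (l, cd M) :: cdF fs
end

theorem triangle {M N : Tm} (h : Par M N) : Par N (cd M) := by
  induction h with
  | var x => exact .var x
  | lam _ ih => exact .lam ih
  | app hM hN ih1 ih2 =>
      rename_i M M' N N'
      cases M with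
      | lam P =>
          cases hM with
          | lam hP =>
              rename_i P'
              have ihP : Par P' (cd P) := by
                have h' : Par (Tm.lam P') (Tm.lam (cd P)) := ih1
                cases h' with
                | lam h => exact h
              exact .beta ihP ih2
      | var x => exact .app ih1 ih2
      | app a b => exact .app ih1 ih2
      | sel a l => exact .app ih1 ih2
      | rcd fs => exact .app ih1 ih2
      | merge a fs => exact .app ih1 ih2
  | beta hM hN ih1 ih2 =>
      exact par_subst0 ih1 ih2
  | selC l hM ih =>
      rename_i M M'
      cases M with
      | rcd fs =>
          obtain ⟨gs, rfl⟩ := rcd_par_inv hM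
          show Par (Tm.sel (.rcd gs) l) (cd (.sel (.rcd fs) l))
          rw [show cd (.sel (.rcd fs) l) =
            (match List.lookup l (cdF fs) with
             | some P => P
             | none => .sel (.rcd (cdF fs)) l) from rfl]
          cases hlk : List.lookup l (cdF fs) with
          | some P => exact .selR ih hlk
          | none => exact .selC l ih
      | var x => exact .selC l ih
      | lam P => exact .selC l ih
      | app a b => exact .selC l ih
      | sel a l' => exact .selC l ih
      | merge a fs => exact .selC l ih
  | selR hfs hl ih =>
      obtain ⟨P, hP, hMP⟩ := lookup_parF ih hl
      rename_i fs fs' l M'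
      rw [show cd (.sel (.rcd fs) l) =
        (match List.lookup l (cdF fs) with
         | some P => P
         | none => .sel (.rcd (cdF fs)) l) from rfl, hP]
      exact hMP
  | rcdNil => exact .rcdNil
  | rcdCons l _ _ ih1 ih2 => exact .rcdCons l ih1 ih2
  | mergeC hM hfs ih1 ih2 =>
      rename_i M M' gs gs'
      cases M with
      | rcd fs =>
          obtain ⟨fs', rfl⟩ := rcd_par_inv hM
          exact .mergeR ih1 ih2
      | var x => exact .mergeC ih1 ih2
      | lam P => exact .mergeC ih1 ih2
      | app a b => exact .mergeC ih1 ih2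
      | sel a l' => exact .mergeC ih1 ih2
      | merge a hs => exact .mergeC ih1 ih2
  | mergeR hfs hgs ih1 ih2 =>
      exact mergeFields_par ih1 ih2

theorem par_diamond {M N₁ N₂ : Tm} (h1 : Par M N₁) (h2 : Par M N₂) :
    ∃ P, Par N₁ P ∧ Par N₂ P :=
  ⟨cd M, triangle h1, triangle h2⟩

end Tm
namespace Tm

theorem parF_middle {M M' : Tm} (h : Par M M') (fs gs : List (Nat × Tm)) (l : Nat) :
    Par (.rcd (fs ++ (l, M) :: gs)) (.rcd (fs ++ (l, M') :: gs)) :=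
  parF_append (parF_refl fs) (.rcdCons l h (parF_refl gs))

theorem red_par {M N : Tm} (h : Red M N) : Par M N := by
  induction h with
  | beta M N => exact .beta (par_refl M) (par_refl N)
  | sel hl => exact .selR (parF_refl _) hl
  | mergeRcd fs gs => exact .mergeR (parF_refl fs) (parF_refl gs)
  | appL N _ ih => exact .app ih (par_refl N)
  | appR M _ ih => exact .app (par_refl M) ih
  | lam _ ih => exact .lam ih
  | selC l _ ih => exact .selC l ih
  | mergeL fs _ ih => exact .mergeC ih (parF_refl fs)
  | rcdField fs gs l _ ih => exact parF_middle ih fs gs l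
  | mergeField N fs gs l _ ih => exact .mergeC (par_refl N) (parF_middle ih fs gs l)

theorem red_rcd_inv {fs : List (Nat × Tm)} {Y : Tm} (h : Red (.rcd fs) Y) :
    ∃ as bs l M M', fs = as ++ (l, M) :: bs ∧ Y = .rcd (as ++ (l, M') :: bs) ∧ Red M M' := by
  cases h with
  | rcdField as bs l hMM' => exact ⟨as, bs, l, _, _, rfl, rfl, hMM'⟩

theorem redstar_rcd_cons (l : Nat) (M : Tm) {gs : List (Nat × Tm)} :
    ∀ {X} (h : RedStar X (.rcd gs)) {fs}, X = .rcd fs →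
      RedStar (.rcd ((l, M) :: fs)) (.rcd ((l, M) :: gs)) := by
  intro X h
  induction h using Relation.ReflTransGen.head_induction_on with
  | refl => intro fs hx; cases hx; exact Relation.ReflTransGen.refl
  | head h' _ ih =>
      intro fs hx; subst hx
      obtain ⟨as, bs, l', M0, M0', rfl, rfl, hstep⟩ := red_rcd_inv h'
      exact Relation.ReflTransGen.head (Red.rcdField ((l, M) :: as) bs l' hstep) (ih rfl)

theorem redstar_merge_right (N : Tm) {gs : List (Nat × Tm)} :
    ∀ {X} (h : RedStar X (.rcd gs)) {fs}, X = .rcd fs →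
      RedStar (.merge N fs) (.merge N gs) := by
  intro X h
  induction h using Relation.ReflTransGen.head_induction_on with
  | refl => intro fs hx; cases hx; exact Relation.ReflTransGen.refl
  | head h' _ ih =>
      intro fs hx; subst hx
      obtain ⟨as, bs, l', M0, M0', rfl, rfl, hstep⟩ := red_rcd_inv h'
      exact Relation.ReflTransGen.head (Red.mergeField N as bs l' hstep) (ih rfl)

theorem par_redstar {M N : Tm} (h : Par M N) : RedStar M N := by
  induction h with
  | var x => exact Relation.ReflTransGen.refl
  | lam _ ih => exact Relation.ReflTransGen.lift Tm.lam (fun a b hab => Red.lam hab) _ _ ih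
  | app hM hN ih1 ih2 =>
      rename_i M M' N N'
      have s1 : RedStar (Tm.app M N) (Tm.app M' N) :=
        Relation.ReflTransGen.lift (fun X => Tm.app X N) (fun a b hab => Red.appL N hab) _ _ ih1
      have s2 : RedStar (Tm.app M' N) (Tm.app M' N') :=
        Relation.ReflTransGen.lift (fun X => Tm.app M' X) (fun a b hab => Red.appR M' hab) _ _ ih2
      exact s1.trans s2
  | beta hM hN ih1 ih2 =>
      rename_i M M' N N'
      have s1 : RedStar (Tm.app (.lam M) N) (Tm.app (.lam M') N) :=
        Relation.ReflTransGen.lift (fun X => Tm.app (.lam X) N)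
          (fun a b hab => Red.appL N (Red.lam hab)) _ _ ih1
      have s2 : RedStar (Tm.app (.lam M') N) (Tm.app (.lam M') N') :=
        Relation.ReflTransGen.lift (fun X => Tm.app (.lam M') X) (fun a b hab => Red.appR _ hab) _ _ ih2
      exact (s1.trans s2).tail (Red.beta M' N')
  | selC l _ ih =>
      exact Relation.ReflTransGen.lift (fun X => Tm.sel X l) (fun a b hab => Red.selC l hab) _ _ ih
  | selR hfs hl ih =>
      rename_i fs fs' l M'
      have s1 : RedStar (Tm.sel (.rcd fs) l) (Tm.sel (.rcd fs') l) :=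
        Relation.ReflTransGen.lift (fun X => Tm.sel X l) (fun a b hab => Red.selC l hab) _ _ ih
      exact s1.tail (Red.sel hl)
  | rcdNil => exact Relation.ReflTransGen.refl
  | rcdCons l hM hfs ih1 ih2 =>
      rename_i M M' fs fs'
      have s1 : RedStar (Tm.rcd ((l, M) :: fs)) (Tm.rcd ((l, M') :: fs)) :=
        Relation.ReflTransGen.lift (fun X => Tm.rcd ((l, X) :: fs))
          (fun a b hab => Red.rcdField [] fs l hab) _ _ ih1
      exact s1.trans (redstar_rcd_cons l M' ih2 rfl)
  | mergeC hM hfs ih1 ih2 =>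
      rename_i M M' fs fs'
      have s1 : RedStar (Tm.merge M fs) (Tm.merge M' fs) :=
        Relation.ReflTransGen.lift (fun X => Tm.merge X fs) (fun a b hab => Red.mergeL fs hab) _ _ ih1
      exact s1.trans (redstar_merge_right M' ih2 rfl)
  | mergeR hfs hgs ih1 ih2 =>
      rename_i fs fs' gs gs'
      have s1 : RedStar (Tm.merge (.rcd fs) gs) (Tm.merge (.rcd fs') gs) :=
        Relation.ReflTransGen.lift (fun X => Tm.merge X gs) (fun a b hab => Red.mergeL gs hab) _ _ ih1
      have s2 : RedStar (Tm.merge (.rcd fs') gs) (Tm.merge (.rcd fs') gs') :=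
        redstar_merge_right (.rcd fs') ih2 rfl
      exact (s1.trans s2).tail (Red.mergeRcd fs' gs')

theorem par_strip {M N₁ N₂ : Tm} (h1 : Par M N₁) (h2 : Relation.ReflTransGen Par M N₂) :
    ∃ P, Relation.ReflTransGen Par N₁ P ∧ Par N₂ P := by
  induction h2 with
  | refl => exact ⟨N₁, Relation.ReflTransGen.refl, h1⟩
  | tail _ hbc ih =>
      obtain ⟨P, hNP, hbP⟩ := ih
      obtain ⟨Q, hPQ, hcQ⟩ := par_diamond hbP hbc
      exact ⟨Q, hNP.tail hPQ, hcQ⟩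

theorem parStar_confluent {M N₁ N₂ : Tm} (h1 : Relation.ReflTransGen Par M N₁)
    (h2 : Relation.ReflTransGen Par M N₂) :
    ∃ P, Relation.ReflTransGen Par N₁ P ∧ Relation.ReflTransGen Par N₂ P := by
  induction h1 with
  | refl => exact ⟨N₂, h2, Relation.ReflTransGen.refl⟩
  | tail _ hbc ih =>
      obtain ⟨P, hbP, hN₂P⟩ := ih
      obtain ⟨Q, hcQ, hPQ⟩ := par_strip hbc hbP
      exact ⟨Q, hcQ, hN₂P.tail hPQ⟩

theorem parStar_redStar {M N : Tm} (h : Relation.ReflTransGen Par M N) : RedStar M N := by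
  induction h with
  | refl => exact Relation.ReflTransGen.refl
  | tail _ hbc ih => exact ih.trans (par_redstar hbc)

theorem redStar_parStar {M N : Tm} (h : RedStar M N) : Relation.ReflTransGen Par M N :=
  Relation.ReflTransGen.mono (fun _ _ hab => red_par hab) _ _ h

end Tm

/-- **Church–Rosser property** of the reduction relation of `Λ_R`. -/
theorem church_rosser (M M₁ M₂ : Tm) (h₁ : RedStar M M₁) (h₂ : RedStar M M₂) :
    ∃ M₃, RedStar M₁ M₃ ∧ RedStar M₂ M₃ := by
  obtain ⟨P, hP1, hP2⟩ := Tm.parStar_confluent (Tm.redStar_parStar h₁) (Tm.redStar_parStar h₂)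
  exact ⟨P, Tm.parStar_redStar hP1, Tm.parStar_redStar hP2⟩
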